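/- Suppose for each pair of vertices (u,v) and each hop bound i, P^{(i)}(u,v) denotes the i-hop-limited shortest u–v path computed by Bellman–Ford with a fixed consistent tie-breaking (prefer smaller weight, then fewer hops, then lexicographically smaller vertex sequence from tail to head). If two paths P^{(i)}(u,v) and P^{(i')}(u',v') both traverse vertices x and y in the same order, with the same number ℓ of hops between x and y in each, then the subpaths between x and y in the two paths are identical. -/

import Mathlib

open scoped ENNReal

namespace Stmt3

variable {V : Type*}

/-- Endpoint of a walk starting at `u` with subsequent vertices given by the list. -/
def last : V → List V → V
  | u, [] => u
  | _, x :: xs => last x xs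

/-- Weight of a walk starting at `u` with subsequent vertices given by the list. -/
noncomputable def cost (w : V → V → ℝ≥0∞) : V → List V → ℝ≥0∞
  | _, [] => 0
  | u, x :: xs => w u x + cost w x xs

/-- `h`-hop-limited distance from `u` to `v` (non-edges have weight `⊤`). -/
noncomputable def hdist (w : V → V → ℝ≥0∞) (h : ℕ) (u v : V) : ℝ≥0∞ :=
  ⨅ p ∈ {p : List V | p.length ≤ h ∧ last u p = v}, cost w u p

/-- Shortest-path distance from `u` to `v`. -/
noncomputable def dist (w : V → V → ℝ≥0∞) (u v : V) : ℝ≥0∞ :=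
  ⨅ h : ℕ, hdist w h u v

/-- `S` is a set of (at most) `k` closest reachable vertices to `v` (excluding `v`),
with ties broken arbitrarily: members of `S` are reachable and distinct from `v`,
`|S| ≤ k`, every member is at least as close as every reachable non-member, and `S`
has exactly `k` elements unless it already contains all reachable vertices. -/
def IsKClosest [Fintype V] (w : V → V → ℝ≥0∞) (k : ℕ) (v : V) (S : Finset V) : Prop :=
  (∀ u ∈ S, u ≠ v ∧ dist w v u < ⊤) ∧ S.card ≤ k ∧
  (∀ y ∈ S, ∀ z, z ∉ S → z ≠ v → dist w v z < ⊤ → dist w v y ≤ dist w v z) ∧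
  (∀ z, z ∉ S → z ≠ v → dist w v z < ⊤ → S.card = k)

/-- Weight function of the union `G ∪ G^(k)` of the graph with the `k`-shortcut hopset:
hopset edges `(u,v)` (present when `u ∈ S v` or `v ∈ S u`) get weight `d_G(u,v)`. -/
noncomputable def unionW [Fintype V] [DecidableEq V] (w : V → V → ℝ≥0∞) (S : V → Finset V)
    (u v : V) : ℝ≥0∞ :=
  if u ∈ S v ∨ v ∈ S u then min (w u v) (dist w u v) else w u v


/-- `p` is the canonical `i`-hop-limited shortest `u`–`v` path: it has at most `i`
edges, ends at `v`, has minimum weight (equal to the `i`-limited distance), and among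
such paths it has the fewest edges and is lexicographically smallest with respect to
the vertex identifiers `ids` (comparing vertex sequences from the tail `u`). -/
def CanonicalPath (w : V → V → ℝ≥0∞) (ids : V → ℕ) (i : ℕ) (u v : V) (p : List V) : Prop :=
  p.length ≤ i ∧ last u p = v ∧ cost w u p = hdist w i u v ∧
  ∀ q : List V, q.length ≤ i → last u q = v → cost w u q = hdist w i u v →
    p.length ≤ q.length ∧
    (p.length = q.length → ¬ List.Lex (· < ·) ((u :: q).map ids) ((u :: p).map ids))


lemma last_append (u : V) (l₁ l₂ : List V) :
    last u (l₁ ++ l₂) = last (last u l₁) l₂ := by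
  induction l₁ generalizing u with
  | nil => rfl
  | cons a l ih => simpa [last] using ih a

lemma cost_append (w : V → V → ℝ≥0∞) (u : V) (l₁ l₂ : List V) :
    cost w u (l₁ ++ l₂) = cost w u l₁ + cost w (last u l₁) l₂ := by
  induction l₁ generalizing u with
  | nil => simp [cost, last]
  | cons a l ih => simp [cost, last, ih, add_assoc]

lemma last_take (u : V) (p : List V) (a : ℕ) (h : a ≤ p.length) :
    last u (p.take a) = (u :: p).getD a u := by
  induction p generalizing u a with
  | nil =>
      have : a = 0 := by simpa using h
      subst this; rfl
  | cons c p ih =>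
      cases a with
      | zero => rfl
      | succ a =>
          have h' : a ≤ p.length := by simpa using h
          have ha : a < (c :: p).length := by simp; omega
          rw [List.take_succ_cons]
          show last c (p.take a) = (u :: c :: p).getD (a + 1) u
          rw [List.getD_cons_succ, ih c a h', List.getD_eq_getElem _ _ ha,
            List.getD_eq_getElem _ _ ha]

lemma cons_drop (u : V) (p : List V) (a : ℕ) (h : a ≤ p.length) :
    (u :: p).drop a = (u :: p).getD a u :: p.drop a := by
  have ha : a < (u :: p).length := by simp; omega
  rw [List.getD_eq_getElem _ _ ha, List.drop_eq_getElem_cons ha, List.drop_succ_cons]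

lemma lex_append {α : Type*} {r : α → α → Prop} :
    ∀ {t s : List α}, List.Lex r t s → t.length = s.length →
      ∀ C C', List.Lex r (t ++ C) (s ++ C')
  | _, _, List.Lex.nil, hlen => by simp at hlen
  | _, _, List.Lex.rel h, _ => fun _ _ => List.Lex.rel h
  | _, _, List.Lex.cons h, hlen => fun C C' =>
      List.Lex.cons (lex_append h (by simpa using hlen) C C')

lemma lex_append_left {α : Type*} {r : α → α → Prop} (A : List α) {m m' : List α}
    (h : List.Lex r m m') : List.Lex r (A ++ m) (A ++ m') := by
  induction A with
  | nil => exact h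
  | cons a A ih => exact List.Lex.cons ih

lemma lex_trichotomy : ∀ (l₁ l₂ : List ℕ),
    l₁ = l₂ ∨ List.Lex (· < ·) l₁ l₂ ∨ List.Lex (· < ·) l₂ l₁
  | [], [] => Or.inl rfl
  | [], _ :: _ => Or.inr (Or.inl List.Lex.nil)
  | _ :: _, [] => Or.inr (Or.inr List.Lex.nil)
  | a :: l₁, b :: l₂ => by
      rcases Nat.lt_trichotomy a b with h | h | h
      · exact Or.inr (Or.inl (List.Lex.rel h))
      · subst h
        rcases lex_trichotomy l₁ l₂ with h | h | h
        · exact Or.inl (by rw [h])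
        · exact Or.inr (Or.inl (List.Lex.cons h))
        · exact Or.inr (Or.inr (List.Lex.cons h))
      · exact Or.inr (Or.inr (List.Lex.rel h))

lemma hdist_le (w : V → V → ℝ≥0∞) {i : ℕ} {u v : V} {p : List V}
    (h1 : p.length ≤ i) (h2 : last u p = v) : hdist w i u v ≤ cost w u p :=
  iInf₂_le p ⟨h1, h2⟩

lemma seg_last (u : V) (p : List V) (a ℓ : ℕ) :
    last (last u (p.take a)) ((p.drop a).take ℓ) = last u (p.take (a + ℓ)) := by
  rw [List.take_add, last_append]

lemma segment_key (w : V → V → ℝ≥0∞) (ids : V → ℕ) (i : ℕ) (u v : V) (p : List V)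
    (hp : CanonicalPath w ids i u v p) (a ℓ : ℕ) (hbp : a + ℓ ≤ p.length)
    (hfin : cost w u p ≠ ⊤)
    (x y : V) (hx : last u (p.take a) = x) (hy : last u (p.take (a + ℓ)) = y)
    (t : List V) (ht : t.length ≤ ℓ) (hlt : last x t = y) :
    cost w x ((p.drop a).take ℓ) ≤ cost w x t ∧
    (cost w x t ≤ cost w x ((p.drop a).take ℓ) →
      t.length = ℓ ∧ ¬ List.Lex (· < ·) (t.map ids) (((p.drop a).take ℓ).map ids)) := by
  obtain ⟨hi, hv, hcost, hmin⟩ := hp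
  set s : List V := (p.drop a).take ℓ with hs
  have hslen : s.length = ℓ := by
    simp only [hs, List.length_take, List.length_drop]; omega
  have hsy : last x s = y := by rw [← hx, seg_last, hy]
  have hsplit : p = p.take a ++ (s ++ p.drop (a + ℓ)) := by
    rw [hs, ← List.append_assoc, ← List.take_add, List.take_append_drop]
  set p' : List V := p.take a ++ (t ++ p.drop (a + ℓ)) with hp'
  have htaka : (p.take a).length = a := by simp; omega
  have hdropl : (p.drop (a + ℓ)).length = p.length - (a + ℓ) := by simp
  have hplen : p'.length = a + (t.length + (p.length - (a + ℓ))) := by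
    simp [hp', htaka]
  have hplen' : p'.length ≤ p.length := by omega
  have hlastp' : last u p' = v := by
    rw [← hv]
    conv_rhs => rw [hsplit]
    rw [hp', last_append, last_append, last_append, last_append, hx, hlt, hsy]
  have hcost_split : cost w u p = cost w u (p.take a) + (cost w x s + cost w y (p.drop (a + ℓ))) := by
    conv_lhs => rw [hsplit]
    rw [cost_append, cost_append, hx, hsy]
  have hcostp' : cost w u p' = cost w u (p.take a) + (cost w x t + cost w y (p.drop (a + ℓ))) := by
    rw [hp', cost_append, cost_append, hx, hlt]
  have hge : hdist w i u v ≤ cost w u p' := hdist_le w (le_trans hplen' hi) hlastp'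
  set A := cost w u (p.take a)
  set B := cost w y (p.drop (a + ℓ))
  have hAB : A + B ≠ ⊤ := by
    intro h
    apply hfin
    rw [hcost_split]
    rcases (by simpa using h : A = ⊤ ∨ B = ⊤) with h | h <;> simp [h]
  have key : A + (cost w x s + B) ≤ A + (cost w x t + B) := by
    rw [← hcost_split, hcost, ← hcostp']
    exact hge
  have hcs : cost w x s ≤ cost w x t := by
    have h1 : (A + B) + cost w x s ≤ (A + B) + cost w x t := by
      calc (A + B) + cost w x s = A + (cost w x s + B) := by ring
      _ ≤ A + (cost w x t + B) := key
      _ = (A + B) + cost w x t := by ring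
    exact (ENNReal.add_le_add_iff_left hAB).mp h1
  refine ⟨hcs, fun hct => ?_⟩
  have hceq : cost w u p' = hdist w i u v := by
    refine le_antisymm ?_ hge
    rw [hcostp', ← hcost, hcost_split]
    exact add_le_add_right (add_le_add_left hct B) A
  obtain ⟨hlen, hlex⟩ := hmin p' (le_trans hplen' hi) hlastp' hceq
  have htl : t.length = ℓ := by omega
  refine ⟨htl, fun hlexts => ?_⟩
  have hplp' : p.length = p'.length := by omega
  apply hlex hplp'
  have h1 : List.Lex (· < ·) (t.map ids ++ (p.drop (a + ℓ)).map ids)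
      (s.map ids ++ (p.drop (a + ℓ)).map ids) :=
    lex_append hlexts (by simp [hslen, htl]) _ _
  have h2 := lex_append_left (((u :: p.take a)).map ids) h1
  have e1 : (u :: p').map ids
      = (u :: p.take a).map ids ++ (t.map ids ++ (p.drop (a + ℓ)).map ids) := by
    simp [hp']
  have e2 : (u :: p).map ids
      = (u :: p.take a).map ids ++ (s.map ids ++ (p.drop (a + ℓ)).map ids) := by
    conv_lhs => rw [hsplit]
    simp
  rw [e1, e2]
  exact h2

lemma canonical_short_of_top (w : V → V → ℝ≥0∞) (ids : V → ℕ) {i : ℕ} {u v : V} {p : List V}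
    (hp : CanonicalPath w ids i u v p) (htop : hdist w i u v = ⊤) : p.length ≤ 1 := by
  obtain ⟨hi, hv, hcost, hmin⟩ := hp
  rcases Nat.eq_zero_or_pos i with h0 | h1
  · omega
  by_cases huv : u = v
  · have : hdist w i u v ≤ cost w u [] := hdist_le w (by simp) (by simpa [last] using huv.symm ▸ rfl)
    rw [htop] at this
    simp [cost] at this
  · have hle : hdist w i u v ≤ cost w u [v] := hdist_le w (by simpa using Nat.succ_le_of_lt h1) rfl
    have hceq : cost w u [v] = hdist w i u v := by
      rw [htop]; exact le_antisymm le_top (htop ▸ hle)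
    exact (hmin [v] (by simpa using Nat.succ_le_of_lt h1) rfl hceq).1

/-- Nesting property of canonical hop-limited shortest paths: if two canonical paths
both traverse `x` and then `y` (in this order), with the same number `ℓ` of hops
between `x` and `y`, then their subpaths between `x` and `y` are identical. -/
theorem canonical_subpaths_eq
    (w : V → V → ℝ≥0∞) (hsymm : ∀ u v, w u v = w v u)
    (ids : V → ℕ) (hids : Function.Injective ids)
    (i i' : ℕ) (u v u' v' : V) (p q : List V)
    (hp : CanonicalPath w ids i u v p) (hq : CanonicalPath w ids i' u' v' q)
    (x y : V) (a b a' b' ℓ : ℕ)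
    (hab : a ≤ b) (hb : b ≤ p.length) (ha'b' : a' ≤ b') (hb' : b' ≤ q.length)
    (hxa : (u :: p).getD a u = x) (hyb : (u :: p).getD b u = y)
    (hxa' : (u' :: q).getD a' u' = x) (hyb' : (u' :: q).getD b' u' = y)
    (hl : b - a = ℓ) (hl' : b' - a' = ℓ) :
    ((u :: p).drop a).take (ℓ + 1) = ((u' :: q).drop a').take (ℓ + 1) := by
  obtain rfl : b = a + ℓ := by omega
  obtain rfl : b' = a' + ℓ := by omega
  have hap : a ≤ p.length := by omega
  have hap' : a' ≤ q.length := by omega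
  rw [cons_drop u p a hap, cons_drop u' q a' hap', hxa, hxa',
    List.take_succ_cons, List.take_succ_cons]
  have hx1 : last u (p.take a) = x := by rw [last_take u p a hap, hxa]
  have hy1 : last u (p.take (a + ℓ)) = y := by rw [last_take u p (a + ℓ) hb, hyb]
  have hx2 : last u' (q.take a') = x := by rw [last_take u' q a' hap', hxa']
  have hy2 : last u' (q.take (a' + ℓ)) = y := by rw [last_take u' q (a' + ℓ) hb', hyb']
  have hs1len : ((p.drop a).take ℓ).length = ℓ := by
    simp only [List.length_take, List.length_drop]; omega
  have hs2len : ((q.drop a').take ℓ).length = ℓ := by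
    simp only [List.length_take, List.length_drop]; omega
  have hs1y : last x ((p.drop a).take ℓ) = y := by rw [← hx1, seg_last, hy1]
  have hs2y : last x ((q.drop a').take ℓ) = y := by rw [← hx2, seg_last, hy2]
  congr 1
  have hl01 : ℓ = 0 ∨ ℓ = 1 ∨ 2 ≤ ℓ := by omega
  rcases hl01 with rfl | rfl | h2
  · simp
  · obtain ⟨c, hc⟩ := List.length_eq_one_iff.mp hs1len
    obtain ⟨d, hd⟩ := List.length_eq_one_iff.mp hs2len
    rw [hc] at hs1y ⊢
    rw [hd] at hs2y ⊢
    simp only [last] at hs1y hs2y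
    rw [hs1y, hs2y]
  · have hfinp : cost w u p ≠ ⊤ := by
      intro h
      have := canonical_short_of_top w ids hp (hp.2.2.1.symm.trans h)
      omega
    have hfinq : cost w u' q ≠ ⊤ := by
      intro h
      have := canonical_short_of_top w ids hq (hq.2.2.1.symm.trans h)
      omega
    obtain ⟨hle1, himp1⟩ := segment_key w ids i u v p hp a ℓ hb hfinp x y hx1 hy1
      ((q.drop a').take ℓ) (le_of_eq hs2len) hs2y
    obtain ⟨hle2, himp2⟩ := segment_key w ids i' u' v' q hq a' ℓ hb' hfinq x y hx2 hy2
      ((p.drop a).take ℓ) (le_of_eq hs1len) hs1y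
    obtain ⟨-, hn1⟩ := himp1 hle2
    obtain ⟨-, hn2⟩ := himp2 hle1
    rcases lex_trichotomy (((p.drop a).take ℓ).map ids) (((q.drop a').take ℓ).map ids)
      with h | h | h
    · exact List.map_injective_iff.mpr hids h
    · exact absurd h hn2
    · exact absurd h hn1


end Stmt3
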